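/- Let p be a probability distribution on ℤ/dℤ with Fourier transform p̂ satisfying 0 ≤ p̂(s) ≤ 1 for all s, c ≥ 0, and suppose 1 - (c/d)∑_{s=0}^{d-1} p̂(s) > 0. Then for the random walk (Z_j) on ℤ/dℤ with increment distribution p started at 0, and any integer I ≥ 1, E[∏_{k=2}^{I}(1 - c·1_{Z_k = 0})] ≥ (1 - (c/d)∑_{s=0}^{d-1} p̂(s))^I. -/

import Mathlib

open Complex

/-- Discrete Fourier transform of a function on ℤ/dℤ. -/
noncomputable def dftZMod (d : ℕ) [NeZero d] (p : ZMod d → ℝ) (s : ZMod d) : ℂ :=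
  ∑ x : ZMod d, (p x : ℂ) *
    Complex.exp (-2 * Real.pi * Complex.I * (s.val : ℂ) * (x.val : ℂ) / d)

/-- E^{Z₁=0}[∏_{2≤k≤I} (1 - c·1_{Z_k = 0})] for the random walk on ℤ/dℤ with
    Z₁ = 0 and i.i.d. increments distributed according to p. -/
noncomputable def walkExpect (d : ℕ) [NeZero d] (p : ZMod d → ℝ) (c : ℝ) (I : ℕ) : ℝ :=
  ∑ x : Fin (I - 1) → ZMod d, (∏ j, p (x j)) *
    ∏ m : Fin (I - 1),
      (1 - c * if (∑ j ∈ Finset.univ.filter (fun j : Fin (I - 1) => j ≤ m), x j) = 0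
        then 1 else 0)

open Finset

set_option linter.unusedSectionVars false
set_option linter.unusedVariables false
set_option maxHeartbeats 1600000

noncomputable def eZ (d : ℕ) (a : ℤ) : ℂ :=
  Complex.exp (2 * Real.pi * Complex.I * a / d)

section Aux
variable {d : ℕ} [NeZero d]

/-- auxiliary exponential -/
lemma eZ_zero : eZ d 0 = 1 := by simp [eZ]

lemma eZ_add (a b : ℤ) : eZ d (a + b) = eZ d a * eZ d b := by
  rw [eZ, eZ, eZ, ← Complex.exp_add]
  congr 1
  push_cast
  ring

lemma eZ_d_mul (k : ℤ) : eZ d ((d : ℤ) * k) = 1 := by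
  have hd : (d : ℂ) ≠ 0 := Nat.cast_ne_zero.mpr (NeZero.ne d)
  rw [eZ]
  have : 2 * (Real.pi : ℂ) * Complex.I * ((d : ℤ) * k : ℤ) / d = (k : ℤ) * (2 * Real.pi * Complex.I) := by
    field_simp
    push_cast
    rfl
  rw [this, Complex.exp_int_mul_two_pi_mul_I]

lemma eZ_congr {a b : ℤ} (h : (d : ℤ) ∣ a - b) : eZ d a = eZ d b := by
  obtain ⟨k, hk⟩ := h
  have : a = b + (d : ℤ) * k := by linarith
  rw [this, eZ_add, eZ_d_mul, mul_one]

lemma eZ_pow (a : ℤ) (k : ℕ) : eZ d (a * k) = eZ d a ^ k := by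
  rw [eZ, eZ, ← Complex.exp_nat_mul]
  congr 1
  push_cast
  ring

lemma eZ_ne_one {a : ℤ} (h : ¬ (d : ℤ) ∣ a) : eZ d a ≠ 1 := by
  intro hc
  rw [eZ, Complex.exp_eq_one_iff] at hc
  obtain ⟨n, hn⟩ := hc
  apply h
  refine ⟨n, ?_⟩
  rw [mul_comm]
  have hd : (d : ℂ) ≠ 0 := Nat.cast_ne_zero.mpr (NeZero.ne d)
  have hπ : (Real.pi : ℂ) ≠ 0 := by
    exact_mod_cast Real.pi_ne_zero
  have h2 : (2 : ℂ) * Real.pi * Complex.I ≠ 0 := by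
    simp [Complex.I_ne_zero, hπ]
  have : (a : ℂ) = (n : ℂ) * d := by
    field_simp at hn
    have := hn
    -- hn : 2 * π * I * a = n * (2 * π * I) * d  (roughly)
    apply mul_left_cancel₀ h2
    ring_nf
    ring_nf at this
    linear_combination (2 * (Real.pi : ℂ) * Complex.I) * this
  exact_mod_cast this

lemma sum_eZ (a : ℤ) :
    ∑ k ∈ Finset.range d, eZ d (a * k) = if (d : ℤ) ∣ a then (d : ℂ) else 0 := by
  by_cases h : (d : ℤ) ∣ a
  · simp only [h, if_true]
    have : ∀ k ∈ Finset.range d, eZ d (a * k) = 1 := by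
      intro k _
      rw [show (1 : ℂ) = eZ d 0 from (eZ_zero).symm]
      apply eZ_congr
      simpa using Dvd.dvd.mul_right h (k : ℤ)
    rw [Finset.sum_congr rfl this]
    simp
  · simp only [h, if_false]
    have hne : eZ d a ≠ 1 := eZ_ne_one h
    have : ∑ k ∈ Finset.range d, eZ d (a * k) = ∑ k ∈ Finset.range d, eZ d a ^ k := by
      refine Finset.sum_congr rfl fun k _ => eZ_pow a k
    rw [this, geom_sum_eq hne]
    have hd : eZ d a ^ d = 1 := by
      rw [← eZ_pow]
      rw [show (1 : ℂ) = eZ d 0 from (eZ_zero).symm]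
      apply eZ_congr
      simp
    rw [hd]
    simp


lemma zmod_sum_val (g : ℕ → ℂ) : ∑ s : ZMod d, g s.val = ∑ k ∈ Finset.range d, g k := by
  refine Finset.sum_nbij' (i := fun s => s.val) (j := fun k => (k : ZMod d)) ?_ ?_ ?_ ?_ ?_
  · intro s _; exact Finset.mem_range.mpr (ZMod.val_lt s)
  · intro k _; exact Finset.mem_univ _
  · intro s _; exact ZMod.natCast_rightInverse s
  · intro k hk; exact ZMod.val_cast_of_lt (Finset.mem_range.mp hk)
  · intro s _; rfl

lemma dft_apply (g : ZMod d → ℝ) (s : ZMod d) :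
    dftZMod d g s = ∑ x : ZMod d, (g x : ℂ) * eZ d (-((s.val : ℤ) * (x.val : ℤ))) := by
  refine Finset.sum_congr rfl fun x _ => ?_
  congr 1
  rw [eZ]
  congr 1
  push_cast
  ring

lemma sum_eZ_zmod (a : ℤ) :
    ∑ s : ZMod d, eZ d (a * (s.val : ℤ)) = if (d : ℤ) ∣ a then (d : ℂ) else 0 := by
  rw [← sum_eZ a]
  exact zmod_sum_val (fun k => eZ d (a * k))

/-- divisibility criterion: `d ∣ w.val - x.val` iff `x = w` -/
lemma dvd_sub_val_iff (x w : ZMod d) : (d : ℤ) ∣ ((w.val : ℤ) - (x.val : ℤ)) ↔ x = w := by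
  constructor
  · intro h
    have h1 : (w.val : ℤ) - x.val = 0 := by
      refine Int.eq_zero_of_abs_lt_dvd h ?_
      have hw := ZMod.val_lt w
      have hx := ZMod.val_lt x
      have hd : 0 < d := Nat.pos_of_ne_zero (NeZero.ne d)
      rw [abs_sub_lt_iff]
      constructor <;> [skip; skip] <;> push_cast <;> omega
    have : w.val = x.val := by omega
    exact (ZMod.val_injective d this.symm)
  · rintro rfl; simp

lemma inv_dft (g : ZMod d → ℝ) (w : ZMod d) :
    ∑ s : ZMod d, dftZMod d g s * eZ d ((s.val : ℤ) * (w.val : ℤ)) = (d : ℂ) * (g w : ℂ) := by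
  simp only [dft_apply, Finset.sum_mul]
  rw [Finset.sum_comm]
  have : ∀ x : ZMod d, ∑ s : ZMod d, (g x : ℂ) * eZ d (-((s.val : ℤ) * x.val)) *
      eZ d ((s.val : ℤ) * w.val) = (g x : ℂ) * (if (d:ℤ) ∣ ((w.val:ℤ) - x.val) then (d:ℂ) else 0) := by
    intro x
    simp only [mul_assoc]
    rw [← Finset.mul_sum]
    congr 1
    rw [← sum_eZ_zmod ((w.val : ℤ) - x.val)]
    refine Finset.sum_congr rfl fun s _ => ?_
    rw [← eZ_add]
    congr 1
    ring
  rw [Finset.sum_congr rfl fun x _ => this x]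
  simp only [dvd_sub_val_iff]
  rw [Finset.sum_congr rfl (fun x _ => by rw [mul_ite, mul_zero])]
  rw [Finset.sum_ite_eq' Finset.univ w (fun x => (g x : ℂ) * d)]
  simp [mul_comm]


lemma dft_zero_eq_sum (g : ZMod d → ℝ) : dftZMod d g 0 = ((∑ x, g x : ℝ) : ℂ) := by
  rw [dft_apply]
  push_cast
  refine Finset.sum_congr rfl fun x _ => ?_
  simp [ZMod.val_zero, eZ_zero]

lemma sum_dft_re (p : ZMod d → ℝ) : ∑ s : ZMod d, (dftZMod d p s).re = d * p 0 := by
  have h := inv_dft p 0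
  simp only [ZMod.val_zero, Nat.cast_zero, mul_zero, eZ_zero, mul_one] at h
  have := congrArg Complex.re h
  rw [Complex.re_sum] at this
  simpa using this

lemma eZ_re_le_one (a : ℤ) : (eZ d a).re ≤ 1 := by
  have : eZ d a = Complex.exp ((2 * Real.pi * a / d : ℝ) * Complex.I) := by
    rw [eZ]; congr 1; push_cast; ring
  rw [this, Complex.exp_ofReal_mul_I_re]
  exact Real.cos_le_one _

lemma p_le_p0 (p : ZMod d → ℝ)
    (hphat : ∀ s, (dftZMod d p s).im = 0 ∧ 0 ≤ (dftZMod d p s).re ∧ (dftZMod d p s).re ≤ 1)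
    (x : ZMod d) : p x ≤ p 0 := by
  have hd : (0:ℝ) < d := by exact_mod_cast Nat.pos_of_ne_zero (NeZero.ne d)
  rw [← mul_le_mul_iff_right₀ hd]
  have h := congrArg Complex.re (inv_dft p x)
  rw [Complex.re_sum] at h
  have hterm : ∀ s : ZMod d, (dftZMod d p s * eZ d ((s.val : ℤ) * (x.val : ℤ))).re
      = (dftZMod d p s).re * (eZ d ((s.val : ℤ) * (x.val : ℤ))).re := by
    intro s
    rw [Complex.mul_re, (hphat s).1]
    ring
  rw [Finset.sum_congr rfl fun s _ => hterm s] at h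
  have h2 : ((d : ℂ) * (p x : ℂ)).re = (d : ℝ) * p x := by simp
  rw [h2] at h
  rw [← h, ← sum_dft_re p]
  refine Finset.sum_le_sum fun s _ => ?_
  have h1 := (hphat s).2.1
  have h2 := eZ_re_le_one (d := d) ((s.val : ℤ) * (x.val : ℤ))
  nlinarith


lemma dvd_val_add_iff (z y : ZMod d) : (d : ℤ) ∣ ((z.val : ℤ) + (y.val : ℤ)) ↔ z + y = 0 := by
  have : ((z.val : ℤ) + (y.val : ℤ)) = ((z.val + y.val : ℕ) : ℤ) := by push_cast; ring
  rw [this, Int.natCast_dvd_natCast, Nat.dvd_iff_mod_eq_zero, ← ZMod.val_add,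
    ZMod.val_eq_zero]

lemma val_add_dvd (z y : ZMod d) : (d : ℤ) ∣ ((z.val : ℤ) + (y.val : ℤ) - (((z + y).val : ℕ) : ℤ)) := by
  rw [ZMod.val_add]
  refine ⟨((z.val + y.val) / d : ℕ), ?_⟩
  have ha : d * ((z.val + y.val) / d) + (z.val + y.val) % d = z.val + y.val :=
    Nat.div_add_mod _ _
  have ha' : ((d : ℤ)) * (((z.val + y.val) / d : ℕ) : ℤ) + (((z.val + y.val) % d : ℕ) : ℤ)
      = (z.val : ℤ) + y.val := by exact_mod_cast ha
  push_cast
  linarith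

lemma plancherel (p μ : ZMod d → ℝ) :
    ∑ s : ZMod d, dftZMod d μ s * dftZMod d p s = (d : ℂ) * ((∑ z, μ z * p (-z) : ℝ) : ℂ) := by
  have step1 : ∀ s : ZMod d, dftZMod d μ s * dftZMod d p s =
      ∑ z : ZMod d, ∑ y : ZMod d, (μ z : ℂ) * (p y : ℂ) *
        eZ d (-(((z.val : ℤ) + (y.val : ℤ))) * (s.val : ℤ)) := by
    intro s
    rw [dft_apply, dft_apply, Finset.sum_mul_sum]
    refine Finset.sum_congr rfl fun z _ => Finset.sum_congr rfl fun y _ => ?_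
    rw [mul_mul_mul_comm, ← eZ_add]
    congr 1
    ring
  rw [Finset.sum_congr rfl fun s _ => step1 s, Finset.sum_comm]
  have step2 : ∀ z : ZMod d, ∑ y : ZMod d, ∑ s : ZMod d, (μ z : ℂ) * (p y : ℂ) *
      eZ d (-(((z.val : ℤ) + (y.val : ℤ))) * (s.val : ℤ)) =
      (μ z : ℂ) * (p (-z) : ℂ) * d := by
    intro z
    have : ∀ y : ZMod d, ∑ s : ZMod d, (μ z : ℂ) * (p y : ℂ) *
        eZ d (-(((z.val : ℤ) + (y.val : ℤ))) * (s.val : ℤ)) =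
        if y = -z then (μ z : ℂ) * (p y : ℂ) * d else 0 := by
      intro y
      have hcond : ((d : ℤ) ∣ -((z.val : ℤ) + (y.val : ℤ))) = (y = -z) := by
        simp only [eq_iff_iff]
        rw [dvd_neg, dvd_val_add_iff]
        constructor
        · intro h; linear_combination h
        · intro h; rw [h]; ring
      have hs : ∑ s : ZMod d, eZ d (-(((z.val : ℤ) + (y.val : ℤ))) * (s.val : ℤ)) =
          if y = -z then (d : ℂ) else 0 := by
        rw [sum_eZ_zmod]
        simp only [hcond]
      rw [← Finset.mul_sum, hs, mul_ite, mul_zero]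
    rw [Finset.sum_congr rfl fun y _ => this y, Finset.sum_ite_eq' Finset.univ (-z)
      (fun y => (μ z : ℂ) * (p y : ℂ) * (d : ℂ))]
    simp
  have swap : ∀ z : ZMod d, ∑ s : ZMod d, ∑ y : ZMod d, (μ z : ℂ) * (p y : ℂ) *
      eZ d (-(((z.val : ℤ) + (y.val : ℤ))) * (s.val : ℤ)) =
      ∑ y : ZMod d, ∑ s : ZMod d, (μ z : ℂ) * (p y : ℂ) *
      eZ d (-(((z.val : ℤ) + (y.val : ℤ))) * (s.val : ℤ)) := fun z => Finset.sum_comm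
  rw [Finset.sum_congr rfl fun z _ => (swap z).trans (step2 z)]
  push_cast
  rw [Finset.mul_sum]
  refine Finset.sum_congr rfl fun z _ => by ring

lemma dft_conv (p μ : ZMod d → ℝ) (s : ZMod d) :
    dftZMod d (fun w => ∑ z, μ z * p (w - z)) s = dftZMod d μ s * dftZMod d p s := by
  rw [dft_apply]
  have step1 : ∀ w : ZMod d, ((∑ z, μ z * p (w - z) : ℝ) : ℂ) * eZ d (-((s.val : ℤ) * (w.val : ℤ)))
      = ∑ z : ZMod d, (μ z : ℂ) * (p (w - z) : ℂ) * eZ d (-((s.val : ℤ) * (w.val : ℤ))) := by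
    intro w
    push_cast
    rw [Finset.sum_mul]
  rw [Finset.sum_congr rfl fun w _ => step1 w, Finset.sum_comm]
  have step2 : ∀ z : ZMod d, ∑ w : ZMod d, (μ z : ℂ) * (p (w - z) : ℂ) *
      eZ d (-((s.val : ℤ) * (w.val : ℤ))) =
      (μ z : ℂ) * eZ d (-((s.val : ℤ) * (z.val : ℤ))) *
      ∑ y : ZMod d, (p y : ℂ) * eZ d (-((s.val : ℤ) * (y.val : ℤ))) := by
    intro z
    rw [← Equiv.sum_comp (Equiv.addLeft z) (fun w => (μ z : ℂ) * (p (w - z) : ℂ) *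
      eZ d (-((s.val : ℤ) * (w.val : ℤ))))]
    rw [Finset.mul_sum]
    refine Finset.sum_congr rfl fun y _ => ?_
    have harg : eZ d (-((s.val : ℤ) * (((z + y).val : ℕ) : ℤ))) =
        eZ d (-((s.val : ℤ) * (z.val : ℤ))) * eZ d (-((s.val : ℤ) * (y.val : ℤ))) := by
      rw [← eZ_add]
      apply eZ_congr
      have h1 := val_add_dvd z y
      have : -((s.val : ℤ) * (((z + y).val : ℕ) : ℤ)) -
          (-((s.val : ℤ) * (z.val : ℤ)) + -((s.val : ℤ) * (y.val : ℤ))) =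
          (s.val : ℤ) * (((z.val : ℤ) + (y.val : ℤ)) - (((z + y).val : ℕ) : ℤ)) := by ring
      rw [this]
      exact Dvd.dvd.mul_left h1 _
    simp only [Equiv.coe_addLeft]
    rw [add_sub_cancel_left, harg]
    ring
  rw [Finset.sum_congr rfl fun z _ => step2 z, dft_apply, dft_apply, Finset.sum_mul]

lemma dft_sub (g h : ZMod d → ℝ) (s : ZMod d) :
    dftZMod d (fun z => g z - h z) s = dftZMod d g s - dftZMod d h s := by
  rw [dftZMod, dftZMod, dftZMod, ← Finset.sum_sub_distrib]
  refine Finset.sum_congr rfl fun x _ => ?_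
  push_cast
  ring

lemma dft_delta (A : ℝ) (s : ZMod d) :
    dftZMod d (fun z => if z = 0 then A else 0) s = (A : ℂ) := by
  rw [dft_apply]
  have : ∀ x : ZMod d, ((if x = 0 then A else 0 : ℝ) : ℂ) * eZ d (-((s.val : ℤ) * (x.val : ℤ)))
      = if x = 0 then (A : ℂ) * eZ d (-((s.val : ℤ) * (x.val : ℤ))) else 0 := by
    intro x; split <;> simp
  rw [Finset.sum_congr rfl fun x _ => this x]
  simp only [Finset.sum_ite_eq', Finset.mem_univ, if_true]
  simp [ZMod.val_zero, eZ_zero]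


noncomputable def walkMu (d : ℕ) [NeZero d] (p : ZMod d → ℝ) (c : ℝ) : ℕ → ZMod d → ℝ
  | 0 => fun z => if z = 0 then 1 else 0
  | n+1 => fun w => (∑ z, walkMu d p c n z * p (w - z)) * (1 - c * if w = 0 then 1 else 0)

lemma walkMu_succ_eq (p : ZMod d → ℝ) (c : ℝ) (n : ℕ) :
    walkMu d p c (n + 1) = fun w => (∑ z, walkMu d p c n z * p (w - z)) -
      (if w = 0 then c * ∑ z, walkMu d p c n z * p (-z) else 0) := by
  funext w
  by_cases hw : w = 0
  · subst hw
    simp only [walkMu, if_true, zero_sub]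
    ring
  · simp only [walkMu, hw, if_false]
    ring

lemma dft_walkMu_zero (p : ZMod d → ℝ) (c : ℝ) (s : ZMod d) :
    dftZMod d (walkMu d p c 0) s = 1 := by
  have : walkMu d p c 0 = fun z => if z = 0 then (1 : ℝ) else 0 := rfl
  rw [this, dft_delta]
  norm_num

lemma dft_walkMu_succ (p : ZMod d → ℝ) (c : ℝ) (n : ℕ) (s : ZMod d) :
    dftZMod d (walkMu d p c (n + 1)) s =
      dftZMod d (walkMu d p c n) s * dftZMod d p s -
      ((c * ∑ z, walkMu d p c n z * p (-z) : ℝ) : ℂ) := by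
  rw [walkMu_succ_eq]
  rw [show (fun w => (∑ z, walkMu d p c n z * p (w - z)) -
      (if w = 0 then c * ∑ z, walkMu d p c n z * p (-z) else 0)) = (fun w =>
      (fun w' => ∑ z, walkMu d p c n z * p (w' - z)) w -
      (fun w' => if w' = 0 then c * ∑ z, walkMu d p c n z * p (-z) else 0) w) from rfl]
  rw [dft_sub, dft_conv, dft_delta]

theorem walkMu_invariant (p : ZMod d → ℝ) (c : ℝ)
    (hp0 : ∀ x, 0 ≤ p x) (hp1 : ∑ x, p x = 1)
    (hphat : ∀ s, (dftZMod d p s).im = 0 ∧ 0 ≤ (dftZMod d p s).re ∧ (dftZMod d p s).re ≤ 1)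
    (hc : 0 ≤ c) (hr : 0 < 1 - c * p 0) (n : ℕ) :
    (∀ s, (dftZMod d (walkMu d p c n) s).im = 0) ∧
    (∀ s, (dftZMod d (walkMu d p c n) s).re ≤ (dftZMod d (walkMu d p c n) 0).re) ∧
    (1 - c * p 0) ^ n ≤ (dftZMod d (walkMu d p c n) 0).re := by
  have hd : (0:ℝ) < d := by exact_mod_cast Nat.pos_of_ne_zero (NeZero.ne d)
  have hp00 : dftZMod d p 0 = 1 := by
    rw [dft_zero_eq_sum, hp1]; norm_num
  induction n with
  | zero =>
    refine ⟨fun s => ?_, fun s => ?_, ?_⟩ <;> simp [dft_walkMu_zero]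
  | succ n ih =>
    obtain ⟨him, hle, hW⟩ := ih
    set u := dftZMod d (walkMu d p c n) with hu
    set B := ∑ z, walkMu d p c n z * p (-z) with hB
    have hrec : ∀ s, dftZMod d (walkMu d p c (n+1)) s = u s * dftZMod d p s - ((c * B : ℝ) : ℂ) :=
      fun s => dft_walkMu_succ p c n s
    have hWpos : 0 ≤ (u 0).re := le_trans (pow_nonneg (le_of_lt hr) n) hW
    -- B bound
    have hplan := congrArg Complex.re (plancherel p (walkMu d p c n))
    rw [Complex.re_sum] at hplan
    have hterm : ∀ s : ZMod d, (u s * dftZMod d p s).re = (u s).re * (dftZMod d p s).re := by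
      intro s
      rw [Complex.mul_re, him s]
      ring
    rw [Finset.sum_congr rfl fun s _ => hterm s] at hplan
    have hplan2 : (d : ℝ) * B = ∑ s : ZMod d, (u s).re * (dftZMod d p s).re := by
      rw [hplan, hB]
      simp
    have hBle : B ≤ p 0 * (u 0).re := by
      have hsum : ∑ s : ZMod d, (u s).re * (dftZMod d p s).re ≤
          ∑ s : ZMod d, (dftZMod d p s).re * (u 0).re := by
        refine Finset.sum_le_sum fun s _ => ?_
        have h1 := (hphat s).2.1
        have h2 := hle s
        nlinarith
      rw [← Finset.sum_mul, sum_dft_re] at hsum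
      have h4 : (d : ℝ) * B ≤ (d : ℝ) * (p 0 * (u 0).re) := by
        rw [hplan2]
        calc ∑ s : ZMod d, (u s).re * (dftZMod d p s).re ≤ d * p 0 * (u 0).re := hsum
          _ = (d : ℝ) * (p 0 * (u 0).re) := by ring
      exact le_of_mul_le_mul_left h4 hd
    -- new values
    have hnew : ∀ s, (dftZMod d (walkMu d p c (n+1)) s).re
        = (u s).re * (dftZMod d p s).re - c * B := by
      intro s
      rw [hrec s, Complex.sub_re, hterm s]
      simp
    have hnew0 : (dftZMod d (walkMu d p c (n+1)) 0).re = (u 0).re - c * B := by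
      rw [hnew 0, hp00]
      simp
    refine ⟨fun s => ?_, fun s => ?_, ?_⟩
    · rw [hrec s, Complex.sub_im, Complex.mul_im, him s, (hphat s).1]
      simp
    · rw [hnew s, hnew0]
      have h1 := (hphat s).2.1
      have h2 := (hphat s).2.2
      have h3 := hle s
      nlinarith
    · rw [hnew0]
      have : (1 - c * p 0) ^ (n + 1) = (1 - c * p 0) ^ n * (1 - c * p 0) := by ring
      rw [this]
      have hcB : c * B ≤ c * (p 0 * (u 0).re) := by
        exact mul_le_mul_of_nonneg_left hBle hc
      nlinarith [pow_nonneg (le_of_lt hr) n]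

lemma filter_le_castSucc {n : ℕ} (m₀ : Fin n) :
    Finset.univ.filter (fun j : Fin (n+1) => j ≤ Fin.castSucc m₀) =
    (Finset.univ.filter (fun j : Fin n => j ≤ m₀)).map Fin.castSuccEmb := by
  ext j
  simp only [Finset.mem_filter, Finset.mem_univ, true_and, Finset.mem_map,
    Fin.castSuccEmb, OrderEmbedding.coe_ofStrictMono, Function.Embedding.coeFn_mk]
  constructor
  · intro hj
    have hlt : (j : ℕ) < n := by
      have := hj
      have h1 : (j : ℕ) ≤ (m₀ : ℕ) := hj
      have h2 : (m₀ : ℕ) < n := m₀.isLt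
      omega
    refine ⟨⟨(j : ℕ), hlt⟩, ?_, ?_⟩
    · exact hj
    · apply Fin.ext
      rfl
  · rintro ⟨j₀, hj₀, rfl⟩
    exact hj₀

lemma snoc_partial_sum {n : ℕ} (x : Fin n → ZMod d) (y : ZMod d) (m₀ : Fin n) :
    ∑ j ∈ Finset.univ.filter (fun j : Fin (n+1) => j ≤ Fin.castSucc m₀), Fin.snoc x y j
    = ∑ j ∈ Finset.univ.filter (fun j : Fin n => j ≤ m₀), x j := by
  rw [filter_le_castSucc, Finset.sum_map]
  refine Finset.sum_congr rfl fun j₀ _ => ?_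
  have : Fin.castSuccEmb j₀ = Fin.castSucc j₀ := rfl
  rw [this, Fin.snoc_castSucc]

lemma snoc_total {n : ℕ} (x : Fin n → ZMod d) (y : ZMod d) :
    ∑ j : Fin (n+1), Fin.snoc x y j = (∑ j : Fin n, x j) + y := by
  rw [Fin.sum_univ_castSucc]
  simp

lemma filter_le_last {n : ℕ} :
    Finset.univ.filter (fun j : Fin (n+1) => j ≤ Fin.last n) = Finset.univ := by
  apply Finset.filter_true_of_mem
  intro j _
  exact Fin.le_last j


/-- the factor `1 - c·1_{v = 0}` -/
noncomputable def ffac (d : ℕ) [NeZero d] (c : ℝ) (v : ZMod d) : ℝ :=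
  1 - c * if v = 0 then 1 else 0

/-- trajectory sum with endpoint pinned at `w` -/
noncomputable def traj (d : ℕ) [NeZero d] (p : ZMod d → ℝ) (c : ℝ) (n : ℕ) (w : ZMod d) : ℝ :=
  ∑ x : Fin n → ZMod d, (∏ j, p (x j)) *
    ((∏ m : Fin n, ffac d c (∑ j ∈ Finset.univ.filter (fun j : Fin n => j ≤ m), x j)) *
      (if (∑ j, x j) = w then 1 else 0))

lemma traj_zero (p : ZMod d → ℝ) (c : ℝ) (w : ZMod d) :
    traj d p c 0 w = if w = 0 then (1:ℝ) else 0 := by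
  rw [traj]
  rw [Fintype.sum_unique]
  simp [eq_comm]

lemma traj_succ (p : ZMod d → ℝ) (c : ℝ) (n : ℕ) (w : ZMod d) :
    traj d p c (n+1) w = (∑ z, traj d p c n z * p (w - z)) * ffac d c w := by
  have hterm : ∀ (y : ZMod d) (x : Fin n → ZMod d),
      (∏ j, p ((Fin.snocEquiv (fun _ : Fin (n+1) => ZMod d)) (y, x) j)) *
        ((∏ m : Fin (n+1), ffac d c (∑ j ∈ Finset.univ.filter (fun j : Fin (n+1) => j ≤ m),
            (Fin.snocEquiv (fun _ : Fin (n+1) => ZMod d)) (y, x) j)) *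
          (if (∑ j, (Fin.snocEquiv (fun _ : Fin (n+1) => ZMod d)) (y, x) j) = w then 1 else 0)) =
      (∏ j, p (x j)) * p y *
        ((∏ m : Fin n, ffac d c (∑ j ∈ Finset.univ.filter (fun j : Fin n => j ≤ m), x j)) *
          (ffac d c ((∑ j, x j) + y) * (if (∑ j, x j) + y = w then 1 else 0))) := by
    intro y x
    simp only [Fin.snocEquiv_apply]
    rw [Fin.prod_univ_castSucc (f := fun j => p (Fin.snoc (α := fun _ : Fin (n+1) => ZMod d) x y j))]
    rw [Fin.prod_univ_castSucc (f := fun m => ffac d c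
      (∑ j ∈ Finset.univ.filter (fun j : Fin (n+1) => j ≤ m),
        Fin.snoc (α := fun _ : Fin (n+1) => ZMod d) x y j))]
    simp only [Fin.snoc_castSucc, Fin.snoc_last, snoc_partial_sum, filter_le_last, snoc_total]
    ring
  rw [traj, ← Equiv.sum_comp (Fin.snocEquiv (fun _ : Fin (n+1) => ZMod d)), Fintype.sum_prod_type]
  rw [Finset.sum_congr rfl fun y _ => Finset.sum_congr rfl fun x _ => hterm y x]
  rw [Finset.sum_comm]
  have hcol : ∀ x : Fin n → ZMod d,
      ∑ y : ZMod d, (∏ j, p (x j)) * p y *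
        ((∏ m : Fin n, ffac d c (∑ j ∈ Finset.univ.filter (fun j : Fin n => j ≤ m), x j)) *
          (ffac d c ((∑ j, x j) + y) * (if (∑ j, x j) + y = w then 1 else 0))) =
      (∏ j, p (x j)) * p (w - ∑ j, x j) *
        ((∏ m : Fin n, ffac d c (∑ j ∈ Finset.univ.filter (fun j : Fin n => j ≤ m), x j)) *
          ffac d c w) := by
    intro x
    have h1 : ∀ y : ZMod d, (∏ j, p (x j)) * p y *
        ((∏ m : Fin n, ffac d c (∑ j ∈ Finset.univ.filter (fun j : Fin n => j ≤ m), x j)) *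
          (ffac d c ((∑ j, x j) + y) * (if (∑ j, x j) + y = w then 1 else 0))) =
        if y = w - ∑ j, x j then (∏ j, p (x j)) * p (w - ∑ j, x j) *
        ((∏ m : Fin n, ffac d c (∑ j ∈ Finset.univ.filter (fun j : Fin n => j ≤ m), x j)) *
          ffac d c w) else 0 := by
      intro y
      by_cases h : y = w - ∑ j, x j
      · subst h
        have h2 : (∑ j, x j) + (w - ∑ j, x j) = w := by ring
        rw [h2]
        simp
      · have h3 : ¬ ((∑ j, x j) + y = w) := by
          intro hh
          exact h (by rw [← hh]; ring)
        simp [h3, h]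
    rw [Finset.sum_congr rfl fun y _ => h1 y]
    rw [Finset.sum_ite_eq' Finset.univ (w - ∑ j, x j)]
    simp
  rw [Finset.sum_congr rfl fun x _ => hcol x]
  -- now transform the RHS
  rw [Finset.sum_mul]
  rw [Finset.sum_congr rfl fun z (_ : z ∈ Finset.univ) => show traj d p c n z * p (w - z) * ffac d c w
    = ∑ x : Fin n → ZMod d, ((∏ j, p (x j)) *
      ((∏ m : Fin n, ffac d c (∑ j ∈ Finset.univ.filter (fun j : Fin n => j ≤ m), x j)) *
        (if (∑ j, x j) = z then 1 else 0))) * (p (w - z) * ffac d c w) by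
      rw [traj, Finset.sum_mul, Finset.sum_mul]
      exact Finset.sum_congr rfl fun x _ => by ring]
  rw [Finset.sum_comm]
  refine Finset.sum_congr rfl fun x _ => ?_
  have h4 : ∀ z : ZMod d, ((∏ j, p (x j)) *
      ((∏ m : Fin n, ffac d c (∑ j ∈ Finset.univ.filter (fun j : Fin n => j ≤ m), x j)) *
        (if (∑ j, x j) = z then 1 else 0))) * (p (w - z) * ffac d c w) =
      if (∑ j, x j) = z then ((∏ j, p (x j)) *
      ((∏ m : Fin n, ffac d c (∑ j ∈ Finset.univ.filter (fun j : Fin n => j ≤ m), x j)) *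
        1)) * (p (w - z) * ffac d c w) else 0 := by
    intro z
    by_cases h : (∑ j, x j) = z <;> simp [h]
  rw [Finset.sum_congr rfl fun z _ => h4 z]
  rw [Finset.sum_ite_eq Finset.univ (∑ j, x j)]
  simp only [Finset.mem_univ, if_true, mul_one]
  ring

lemma traj_eq_walkMu (p : ZMod d → ℝ) (c : ℝ) (n : ℕ) (w : ZMod d) :
    traj d p c n w = walkMu d p c n w := by
  induction n generalizing w with
  | zero => rw [traj_zero]; rfl
  | succ n ih =>
    rw [traj_succ, show walkMu d p c (n+1) w = (∑ z, walkMu d p c n z * p (w - z)) *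
      (1 - c * if w = 0 then 1 else 0) from rfl]
    rw [Finset.sum_congr rfl fun z _ => by rw [ih z]]
    rfl

lemma walkExpect_eq_sum_walkMu (p : ZMod d → ℝ) (c : ℝ) (I : ℕ) :
    walkExpect d p c I = ∑ w : ZMod d, walkMu d p c (I - 1) w := by
  rw [Finset.sum_congr rfl fun w (_ : w ∈ Finset.univ) => (traj_eq_walkMu p c (I-1) w).symm]
  rw [walkExpect]
  unfold traj
  rw [Finset.sum_comm]
  refine Finset.sum_congr rfl fun x _ => ?_
  have h4 : ∀ w : ZMod d, (∏ j, p (x j)) *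
      ((∏ m : Fin (I-1), ffac d c (∑ j ∈ Finset.univ.filter (fun j : Fin (I-1) => j ≤ m), x j)) *
        (if (∑ j, x j) = w then 1 else 0)) =
      if (∑ j, x j) = w then (∏ j, p (x j)) *
      ((∏ m : Fin (I-1), ffac d c (∑ j ∈ Finset.univ.filter (fun j : Fin (I-1) => j ≤ m), x j)) *
        1) else 0 := by
    intro w
    by_cases h : (∑ j, x j) = w <;> simp [h]
  rw [Finset.sum_congr rfl fun w _ => h4 w]
  rw [Finset.sum_ite_eq Finset.univ (∑ j, x j)]
  simp only [Finset.mem_univ, if_true, mul_one]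
  rfl


end Aux

theorem stmt_17 (d : ℕ) [NeZero d] (p : ZMod d → ℝ) (c : ℝ)
    (hp0 : ∀ x, 0 ≤ p x) (hp1 : ∑ x, p x = 1)
    (hphat : ∀ s, (dftZMod d p s).im = 0 ∧ 0 ≤ (dftZMod d p s).re ∧ (dftZMod d p s).re ≤ 1)
    (hc : 0 ≤ c)
    (hpos : 0 < 1 - (c / d) * ∑ s : ZMod d, (dftZMod d p s).re)
    (I : ℕ) (hI : 1 ≤ I) :
    walkExpect d p c I ≥ (1 - (c / d) * ∑ s : ZMod d, (dftZMod d p s).re) ^ I := by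
  have hd : (0:ℝ) < d := by exact_mod_cast Nat.pos_of_ne_zero (NeZero.ne d)
  have hr_eq : 1 - (c / d) * ∑ s : ZMod d, (dftZMod d p s).re = 1 - c * p 0 := by
    rw [sum_dft_re]
    field_simp
  rw [hr_eq] at hpos ⊢
  have key := walkMu_invariant p c hp0 hp1 hphat hc hpos (I - 1)
  have hW : (1 - c * p 0) ^ (I - 1) ≤ (dftZMod d (walkMu d p c (I-1)) 0).re := key.2.2
  have hWE : walkExpect d p c I = (dftZMod d (walkMu d p c (I-1)) 0).re := by
    rw [walkExpect_eq_sum_walkMu, dft_zero_eq_sum]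
    simp
  rw [hWE]
  refine le_trans ?_ hW
  apply pow_le_pow_of_le_one (le_of_lt hpos)
  · have : 0 ≤ c * p 0 := mul_nonneg hc (hp0 0)
    linarith
  · exact Nat.sub_le I 1
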